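/- If G is NBUE with mean α, i.e. ∫₀^∞ (1 − G(v)) dv = α and ∫_t^∞ (1 − G(v)) dv ≤ α(1 − G(t)) for all t ≥ 0, then ∫_t^∞ (1 − G(v)) dv ≤ α e^{−t/α} for all t ≥ 0. (An NBUE service time distribution is dominated in the variability order by the exponential distribution with the same mean.) -/

import Mathlib

open MeasureTheory Real Set Filter

/-- An NBUE distribution is dominated in the variability order by the exponential
distribution with the same mean: if `∫_t^∞ (1-G) ≤ α(1 - G(t))` for all `t ≥ 0`,
then `∫_t^∞ (1-G) ≤ α e^{-t/α}` for all `t ≥ 0`. -/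
theorem nbue_integrated_tail_le_exponential
    (G : ℝ → ℝ)
    (hmono : Monotone G)
    (hrc : ∀ v : ℝ, ContinuousWithinAt G (Set.Ici v) v)
    (hneg : ∀ v : ℝ, v < 0 → G v = 0)
    (hlim : Tendsto G atTop (nhds 1))
    (α : ℝ)
    (hInt : IntegrableOn (fun v => 1 - G v) (Ioi 0))
    (hα : α = ∫ v in Ioi (0:ℝ), (1 - G v))
    (hαpos : 0 < α)
    (hNBUE : ∀ t : ℝ, 0 ≤ t → (∫ v in Ioi t, (1 - G v)) ≤ α * (1 - G t)) :
    ∀ t : ℝ, 0 ≤ t → (∫ v in Ioi t, (1 - G v)) ≤ α * exp (-t / α) := by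
  intro t ht
  set f : ℝ → ℝ := fun v => 1 - G v with hf
  have hGle : ∀ v, G v ≤ 1 := fun v => hmono.ge_of_tendsto hlim v
  have hfnn : ∀ v, 0 ≤ f v := fun v => by simpa [hf] using hGle v
  have hIntOn : ∀ s : ℝ, 0 ≤ s → IntegrableOn f (Ioi s) := fun s hs =>
    hInt.mono_set (Ioi_subset_Ioi hs)
  have hHnn : ∀ s : ℝ, 0 ≤ ∫ v in Ioi s, f v := fun s =>
    setIntegral_nonneg measurableSet_Ioi (fun v _ => hfnn v)
  -- key step inequality
  have key : ∀ x h : ℝ, 0 ≤ x → 0 ≤ h →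
      (∫ v in Ioi (x + h), f v) * (1 + h / α) ≤ ∫ v in Ioi x, f v := by
    intro x h hx hh
    have hxh : 0 ≤ x + h := add_nonneg hx hh
    have hIocInt : IntegrableOn f (Ioc x (x + h)) :=
      (hIntOn x hx).mono_set Ioc_subset_Ioi_self
    have hsplit : (∫ v in Ioi x, f v)
        = (∫ v in Ioc x (x + h), f v) + ∫ v in Ioi (x + h), f v := by
      rw [← setIntegral_union (Ioc_disjoint_Ioi le_rfl) measurableSet_Ioi
        hIocInt (hIntOn (x + h) hxh), Ioc_union_Ioi_eq_Ioi (by linarith)]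
    have hlow : f (x + h) * h ≤ ∫ v in Ioc x (x + h), f v := by
      have := setIntegral_ge_of_const_le (c := f (x + h)) measurableSet_Ioc
        measure_Ioc_lt_top.ne
        (fun v hv => by
          have : G v ≤ G (x + h) := hmono hv.2
          simp only [hf]; linarith)
        hIocInt
      simpa [Real.volume_Ioc, add_sub_cancel_left, ENNReal.toReal_ofReal hh, max_eq_left hh, mul_comm]
        using this
    have hN : (∫ v in Ioi (x + h), f v) ≤ α * f (x + h) := hNBUE (x + h) hxh
    have h5 : (∫ v in Ioi (x + h), f v) * h ≤ α * ∫ v in Ioc x (x + h), f v := by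
      calc (∫ v in Ioi (x + h), f v) * h
          ≤ (α * f (x + h)) * h := mul_le_mul_of_nonneg_right hN hh
        _ = α * (f (x + h) * h) := by ring
        _ ≤ α * ∫ v in Ioc x (x + h), f v := mul_le_mul_of_nonneg_left hlow hαpos.le
    have h6 : (∫ v in Ioi (x + h), f v) * h / α ≤ ∫ v in Ioc x (x + h), f v :=
      (div_le_iff₀ hαpos).mpr (by linarith)
    have h7 : (∫ v in Ioi (x + h), f v) * (1 + h / α)
        = (∫ v in Ioi (x + h), f v) + (∫ v in Ioi (x + h), f v) * h / α := by
      ring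
    rw [h7, hsplit]
    linarith
  -- induction
  have ind : ∀ h : ℝ, 0 ≤ h → ∀ k : ℕ,
      (∫ v in Ioi ((k : ℝ) * h), f v) * (1 + h / α) ^ k ≤ α := by
    intro h hh k
    induction k with
    | zero => simpa using hα.ge
    | succ k ih =>
      have hk : (0:ℝ) ≤ (k : ℝ) * h := mul_nonneg (Nat.cast_nonneg k) hh
      have hkey := key ((k : ℝ) * h) h hk hh
      have hpow : (0:ℝ) ≤ (1 + h / α) ^ k :=
        pow_nonneg (by positivity) k
      have h2 : (∫ v in Ioi ((k : ℝ) * h + h), f v) * (1 + h / α) * (1 + h / α) ^ k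
          ≤ (∫ v in Ioi ((k : ℝ) * h), f v) * (1 + h / α) ^ k :=
        mul_le_mul_of_nonneg_right hkey hpow
      calc (∫ v in Ioi (((k : ℕ) + 1 : ℕ) * h : ℝ), f v) * (1 + h / α) ^ (k + 1)
          = (∫ v in Ioi ((k : ℝ) * h + h), f v) * (1 + h / α) * (1 + h / α) ^ k := by
            push_cast; ring_nf
        _ ≤ (∫ v in Ioi ((k : ℝ) * h), f v) * (1 + h / α) ^ k := h2
        _ ≤ α := ih
  -- apply with h = t / n
  set a := t / α with ha
  have hann : 0 ≤ a := div_nonneg ht hαpos.le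
  have hbound : ∀ n : ℕ, 1 ≤ n →
      (∫ v in Ioi t, f v) ≤ α / (1 + a / n) ^ n := by
    intro n hn
    have hnpos : (0:ℝ) < n := by exact_mod_cast hn
    have hh : 0 ≤ t / n := div_nonneg ht hnpos.le
    have := ind (t / n) hh n
    have ht' : (n : ℝ) * (t / n) = t := by field_simp
    rw [ht'] at this
    have heq : (1 + (t / n) / α) = (1 + a / n) := by
      rw [ha, div_div, div_div, mul_comm]
    rw [heq] at this
    have hpowpos : (0:ℝ) < (1 + a / n) ^ n :=
      pow_pos (by positivity) n
    rw [le_div_iff₀ hpowpos]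
    exact this
  have hlim2 : Tendsto (fun n : ℕ => α / (1 + a / n) ^ n) atTop
      (nhds (α * exp (-t / α))) := by
    have h1 : Tendsto (fun n : ℕ => (1 + a / n) ^ n) atTop (nhds (exp a)) :=
      Real.tendsto_one_add_div_pow_exp a
    have h2 : α * exp (-t / α) = α / exp a := by
      simp [ha, neg_div, Real.exp_neg, div_eq_mul_inv]
    rw [h2]
    exact (tendsto_const_nhds (x := α) (f := atTop (α := ℕ))).div h1 (exp_ne_zero a)
  refine ge_of_tendsto hlim2 ?_
  filter_upwards [eventually_ge_atTop 1] with n hn using hbound n hn
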